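/- Let n ≥ 3, let K be a division ring with at least 3 elements, let P be an n-dimensional affine space over K, set m = ⌊(n+1)/2⌋ and r = 2^{m+1} − 4, and let a₁, …, a_m be independent lines of P with U the affine span of a₁ ∪ … ∪ a_m. Then every line h of P contained in U satisfies M_r(a₁,…,a_m; h). -/

import Mathlib

/-- `a` is an affine line: a nonempty affine subspace whose direction has finrank 1. -/
def ALine (K : Type*) {V P : Type*} [DivisionRing K] [AddCommGroup V] [Module K V]
    [AddTorsor V P] (a : AffineSubspace K P) : Prop :=
  (a : Set P).Nonempty ∧ Module.finrank K a.direction = 1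

/-- `a` is an affine plane: a nonempty affine subspace whose direction has finrank 2. -/
def APlane (K : Type*) {V P : Type*} [DivisionRing K] [AddCommGroup V] [Module K V]
    [AddTorsor V P] (a : AffineSubspace K P) : Prop :=
  (a : Set P).Nonempty ∧ Module.finrank K a.direction = 2

/-- Two lines intersect: they are different and have a common point. -/
def AMeets {K V P : Type*} [DivisionRing K] [AddCommGroup V] [Module K V]
    [AddTorsor V P] (a b : AffineSubspace K P) : Prop :=
  a ≠ b ∧ ((a : Set P) ∩ (b : Set P)).Nonempty

/-- `x` meets the lines `y` and `z` in two distinct points. -/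
def AMeetsTwo {K V P : Type*} [DivisionRing K] [AddCommGroup V] [Module K V]
    [AddTorsor V P] (x y z : AffineSubspace K P) : Prop :=
  AMeets x y ∧ AMeets x z ∧ x ⊓ y ≠ x ⊓ z

/-- `M(ℓ₁,…,ℓ_k; x)`: `x` is one of the lines in the list `ls`, or `x` meets two of
them in two distinct points. -/
def MPred {K V P : Type*} [DivisionRing K] [AddCommGroup V] [Module K V]
    [AddTorsor V P] (ls : List (AffineSubspace K P)) (x : AffineSubspace K P) : Prop :=
  x ∈ ls ∨ ∃ y ∈ ls, ∃ z ∈ ls, AMeetsTwo x y z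

/-- `M_q(a₁,…,a_m; x)`: there are lines `b₁,…,b_q` such that
`M(a₁,…,a_m,b₁,…,b_{i-1}; bᵢ)` for all `i`, and `M(a₁,…,a_m,b₁,…,b_q; x)`. -/
def MqPred {K V P : Type*} [DivisionRing K] [AddCommGroup V] [Module K V]
    [AddTorsor V P] (q : ℕ) (as : List (AffineSubspace K P))
    (x : AffineSubspace K P) : Prop :=
  ∃ b : Fin q → AffineSubspace K P, (∀ i, ALine K (b i)) ∧
    (∀ i : Fin q, MPred (as ++ (List.ofFn b).take i) (b i)) ∧
    MPred (as ++ List.ofFn b) x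

section Plumbing


variable {K V P : Type*} [DivisionRing K] [AddCommGroup V] [Module K V] [AddTorsor V P]

theorem MPred.mono {ls ls' : List (AffineSubspace K P)} {x : AffineSubspace K P}
    (h : MPred ls x) (hs : ∀ y ∈ ls, y ∈ ls') : MPred ls' x := by
  rcases h with h | ⟨y, hy, z, hz, hm⟩
  · exact Or.inl (hs _ h)
  · exact Or.inr ⟨y, hs _ hy, z, hs _ hz, hm⟩

/-- A valid chain of auxiliary lines over a base list. -/
def GoodChain (as : List (AffineSubspace K P)) : List (AffineSubspace K P) → Prop
  | [] => True
  | c :: cs => ALine K c ∧ MPred as c ∧ GoodChain (as ++ [c]) cs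

theorem GoodChain.mono : ∀ {c as as' : List (AffineSubspace K P)},
    GoodChain as c → (∀ y ∈ as, y ∈ as') → GoodChain as' c
  | [], _, _, _, _ => trivial
  | c :: cs, as, as', ⟨h1, h2, h3⟩, hs =>
    ⟨h1, h2.mono hs, h3.mono (by
      intro y hy
      rcases List.mem_append.1 hy with hy | hy
      · exact List.mem_append.2 (Or.inl (hs _ hy))
      · exact List.mem_append.2 (Or.inr hy))⟩

theorem GoodChain.append : ∀ {c₁ c₂ as : List (AffineSubspace K P)},
    GoodChain as c₁ → GoodChain (as ++ c₁) c₂ → GoodChain as (c₁ ++ c₂)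
  | [], c₂, as, _, h₂ => by simpa using h₂.mono (by simp)
  | c :: cs, c₂, as, ⟨h1, h2, h3⟩, h₂ => by
    refine ⟨h1, h2, GoodChain.append h3 ?_⟩
    refine h₂.mono ?_
    intro y hy; simp at hy ⊢; tauto

theorem GoodChain.lines : ∀ {c as : List (AffineSubspace K P)},
    GoodChain as c → ∀ x ∈ c, ALine K x
  | [], _, _, x, hx => by simp at hx
  | c :: cs, as, ⟨h1, _, h3⟩, x, hx => by
    rcases List.mem_cons.1 hx with rfl | hx
    · exact h1
    · exact h3.lines x hx

theorem GoodChain.step : ∀ {c as : List (AffineSubspace K P)},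
    GoodChain as c → ∀ i : Fin c.length, MPred (as ++ c.take i) (c.get i)
  | [], _, _, i => absurd i.2 (by simp)
  | c :: cs, as, ⟨_, h2, h3⟩, i => by
    rcases Fin.eq_zero_or_eq_succ i with rfl | ⟨j, rfl⟩
    · simpa using h2
    · have := h3.step ⟨j, by simpa using j.2⟩
      simpa [List.append_assoc] using this

/-- Reachability of a line from a base list within `k` steps. -/
def Reach (k : ℕ) (as : List (AffineSubspace K P)) (x : AffineSubspace K P) : Prop :=
  ∃ c, GoodChain as c ∧ c.length ≤ k ∧ MPred (as ++ c) x

theorem Reach.of_mem {k : ℕ} {as : List (AffineSubspace K P)} {x : AffineSubspace K P}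
    (h : x ∈ as) : Reach k as x :=
  ⟨[], trivial, by simp, Or.inl (by simp [h])⟩

theorem Reach.mono {k k' : ℕ} {as as' : List (AffineSubspace K P)} {x : AffineSubspace K P}
    (h : Reach k as x) (hk : k ≤ k') (hs : ∀ y ∈ as, y ∈ as') : Reach k' as' x := by
  obtain ⟨c, h1, h2, h3⟩ := h
  refine ⟨c, h1.mono hs, h2.trans hk, h3.mono ?_⟩
  intro y hy
  rcases List.mem_append.1 hy with hy | hy
  · exact List.mem_append.2 (Or.inl (hs _ hy))
  · exact List.mem_append.2 (Or.inr hy)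

theorem gc_replicate {a₀ : AffineSubspace K P} (hl : ALine K a₀) :
    ∀ (n : ℕ) {as : List (AffineSubspace K P)}, a₀ ∈ as → GoodChain as (List.replicate n a₀)
  | 0, _, _ => trivial
  | n + 1, as, ha => by
    refine ⟨hl, Or.inl ha, ?_⟩
    exact gc_replicate hl n (by simp [ha])

theorem Reach.toMqPred {r : ℕ} {as : List (AffineSubspace K P)} {x a₀ : AffineSubspace K P}
    (h : Reach r as x) (ha : a₀ ∈ as) (hl : ALine K a₀) : MqPred r as x := by
  obtain ⟨c, h1, h2, h3⟩ := h
  set c' : List (AffineSubspace K P) := c ++ List.replicate (r - c.length) a₀ with hc'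
  have hlen : c'.length = r := by simp [hc']; omega
  have hgc : GoodChain as c' := h1.append (gc_replicate hl _ (by simp [ha]))
  have hsub : ∀ y ∈ as ++ c, y ∈ as ++ c' := by
    intro y hy; rcases List.mem_append.1 hy with hy | hy <;>
      simp [hc', hy]
  refine ⟨fun i => c'.get (Fin.cast hlen.symm i), fun i => hgc.lines _ (by simp), ?_, ?_⟩
  · have hofn : List.ofFn (fun i : Fin r => c'.get (Fin.cast hlen.symm i)) = c' := by
      apply List.ext_getElem <;> simp [hlen]
    intro i
    rw [hofn]
    exact hgc.step (Fin.cast hlen.symm i)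
  · have hofn : List.ofFn (fun i : Fin r => c'.get (Fin.cast hlen.symm i)) = c' := by
      apply List.ext_getElem <;> simp [hlen]
    rw [hofn]
    exact h3.mono hsub

end Plumbing

section Geo
variable {K V P : Type*} [DivisionRing K] [AddCommGroup V] [Module K V] [AddTorsor V P]
open Module


theorem line_fd {x : AffineSubspace K P} (hx : ALine K x) :
    FiniteDimensional K x.direction := .of_finrank_eq_succ hx.2

/-- A subspace of a line containing two distinct points is the line. -/
theorem eq_line_of_le_of_two_mem {s x : AffineSubspace K P} (hx : ALine K x) (hle : s ≤ x)
    {p q : P} (hp : p ∈ s) (hq : q ∈ s) (hpq : p ≠ q) : s = x := by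
  have hfd : FiniteDimensional K x.direction := line_fd hx
  have hv : q -ᵥ p ∈ s.direction := AffineSubspace.vsub_mem_direction hq hp
  have hv0 : q -ᵥ p ≠ 0 := vsub_ne_zero.2 hpq.symm
  have h1 : (K ∙ (q -ᵥ p)) ≤ s.direction := (Submodule.span_singleton_le_iff_mem _ _).2 hv
  have h2 : s.direction ≤ x.direction := AffineSubspace.direction_le hle
  have h3 : (K ∙ (q -ᵥ p)) = x.direction := by
    apply Submodule.eq_of_le_of_finrank_le (h1.trans h2)
    rw [hx.2, finrank_span_singleton hv0]
  have hd : s.direction = x.direction := le_antisymm h2 (h3 ▸ h1)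
  exact AffineSubspace.ext_of_direction_eq hd ⟨p, hp, hle hp⟩

theorem line_eq_line_of_two_mem {x y : AffineSubspace K P} (hx : ALine K x) (hy : ALine K y)
    {p q : P} (hpx : p ∈ x) (hpy : p ∈ y) (hqx : q ∈ x) (hqy : q ∈ y) (hpq : p ≠ q) : x = y := by
  have h1 : x ⊓ y = x := eq_line_of_le_of_two_mem hx inf_le_left
    (⟨hpx, hpy⟩ : p ∈ x ⊓ y) (⟨hqx, hqy⟩ : q ∈ x ⊓ y) hpq
  have h2 : x ⊓ y = y := eq_line_of_le_of_two_mem hy inf_le_right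
    (⟨hpx, hpy⟩ : p ∈ x ⊓ y) (⟨hqx, hqy⟩ : q ∈ x ⊓ y) hpq
  rw [← h1, h2]

theorem aMeetsTwo_of {x y z : AffineSubspace K P} (hx : ALine K x) (hy : ALine K y)
    (hz : ALine K z) (hxy : x ≠ y) (hxz : x ≠ z) {p q : P}
    (hpx : p ∈ x) (hpy : p ∈ y) (hqx : q ∈ x) (hqz : q ∈ z) (hpq : p ≠ q) :
    AMeets x y ∧ AMeets x z ∧ x ⊓ y ≠ x ⊓ z := by
  refine ⟨⟨hxy, p, hpx, hpy⟩, ⟨hxz, q, hqx, hqz⟩, fun he => hxy ?_⟩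
  have hq' : q ∈ x ⊓ y := he ▸ (⟨hqx, hqz⟩ : q ∈ x ⊓ z)
  exact line_eq_line_of_two_mem hx hy hpx hpy hqx hq'.2 hpq

/-- The line through two distinct points. -/
theorem line_through (hK : Nontrivial K) {p q : P} (hpq : p ≠ q) :
    ALine K (affineSpan K {p, q}) := by
  refine ⟨⟨p, subset_affineSpan K _ (by simp)⟩, ?_⟩
  rw [direction_affineSpan, vectorSpan_pair]
  exact finrank_span_singleton (vsub_ne_zero.2 hpq)

theorem mem_line_left (p q : P) : p ∈ affineSpan K {p, q} :=
  subset_affineSpan K _ (by simp)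

theorem mem_line_right (p q : P) : q ∈ affineSpan K {p, q} :=
  subset_affineSpan K _ (by simp)

theorem mem_line_param (c : K) (p q : P) : c • (q -ᵥ p) +ᵥ p ∈ affineSpan K {p, q} :=
  AffineSubspace.smul_vsub_vadd_mem _ c (mem_line_right p q) (mem_line_left p q)
    (mem_line_left p q)

/-- A member of the line through `p, q` (`p ≠ q`) has a parameter. -/
theorem exists_param_of_mem_line {p q x : P} (hpq : p ≠ q) (hx : x ∈ affineSpan K {p, q}) :
    ∃ c : K, x = c • (q -ᵥ p) +ᵥ p := by
  have hp : p ∈ affineSpan K {p, q} := mem_line_left p q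
  have hd : x -ᵥ p ∈ (affineSpan K ({p, q} : Set P)).direction :=
    AffineSubspace.vsub_mem_direction hx hp
  rw [direction_affineSpan, vectorSpan_pair_rev] at hd
  obtain ⟨c, hc⟩ := Submodule.mem_span_singleton.1 hd
  exact ⟨c, by rw [hc]; simp⟩

theorem line_le {s : AffineSubspace K P} {p q : P} (hp : p ∈ s) (hq : q ∈ s) :
    affineSpan K {p, q} ≤ s := by
  rw [affineSpan_le]
  rintro x (rfl | rfl) <;> assumption

/-- two distinct points on a line -/
theorem line_two_points {x : AffineSubspace K P} (hx : ALine K x) :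
    ∃ p q : P, p ∈ x ∧ q ∈ x ∧ p ≠ q := by
  obtain ⟨p, hp⟩ := hx.1
  have : x.direction ≠ ⊥ := by
    intro h
    have h2 := hx.2
    rw [h] at h2
    simp [finrank_bot] at h2
  obtain ⟨e, he, he0⟩ := Submodule.exists_mem_ne_zero_of_ne_bot this
  refine ⟨p, e +ᵥ p, hp, AffineSubspace.vadd_mem_of_mem_direction he hp, ?_⟩
  intro h
  exact he0 (by simpa using congrArg (· -ᵥ p) h.symm)

theorem exists_scalar_ne_ne (hK : (3 : Cardinal) ≤ Cardinal.mk K) (x y : K) :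
    ∃ c : K, c ≠ x ∧ c ≠ y := by
  by_contra hc
  push_neg at hc
  classical
  have hinj : Function.Injective (fun c : K => ULift.up.{u_1} (if c = x then true else false)) := by
    intro c c' h
    by_cases h1 : c = x <;> by_cases h2 : c' = x
    · rw [h1, h2]
    · simp [h1, h2] at h
    · simp [h1, h2] at h
    · rw [hc c h1, hc c' h2]
  have h2 : Cardinal.mk K ≤ 2 := by
    have := Cardinal.mk_le_of_injective hinj
    simpa using this
  have := hK.trans h2
  norm_num at this

end Geo

section Dims
variable {K V P : Type*} [DivisionRing K] [AddCommGroup V] [Module K V] [AddTorsor V P]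
open Module

theorem iUnion_fin_succ {k : ℕ} (f : Fin (k + 1) → Set P) :
    (⋃ i, f i) = (⋃ i : Fin k, f i.castSucc) ∪ f (Fin.last k) := by
  apply Set.Subset.antisymm
  · refine Set.iUnion_subset fun i => ?_
    induction i using Fin.lastCases with
    | last => exact Set.subset_union_right
    | cast j =>
        exact (Set.subset_iUnion (fun i : Fin k => f i.castSucc) j).trans Set.subset_union_left
  · exact Set.union_subset (Set.iUnion_subset fun j => Set.subset_iUnion f j.castSucc)
      (Set.subset_iUnion f _)

theorem span_singleton_finrank_le (v : V) : finrank K (K ∙ v) ≤ 1 := by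
  rcases eq_or_ne v 0 with rfl | hv
  · rw [Submodule.span_zero_singleton]
    simp
  · rw [finrank_span_singleton hv]

theorem span_lines_fd : ∀ (k : ℕ) (b : Fin (k + 1) → AffineSubspace K P),
    (∀ i, ALine K (b i)) →
    FiniteDimensional K (affineSpan K (⋃ i, (b i : Set P))).direction ∧
    finrank K (affineSpan K (⋃ i, (b i : Set P))).direction ≤ 2 * k + 1
  | 0, b, hb => by
    have h0 : (⋃ i, (b i : Set P)) = (b 0 : Set P) :=
      Set.Subset.antisymm (Set.iUnion_subset fun i => by rw [show i = 0 from Fin.ext (by omega)])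
        (Set.subset_iUnion (fun i : Fin 1 => (b i : Set P)) 0)
    rw [h0, AffineSubspace.affineSpan_coe]
    exact ⟨line_fd (hb 0), by rw [(hb 0).2]⟩
  | k + 1, b, hb => by
    obtain ⟨hfd, hle⟩ := span_lines_fd k (fun i => b i.castSucc) (fun i => hb _)
    have hsplit : affineSpan K (⋃ i, (b i : Set P)) =
        affineSpan K (⋃ i : Fin (k+1), (b i.castSucc : Set P)) ⊔ b (Fin.last (k+1)) := by
      rw [iUnion_fin_succ (fun i => (b i : Set P)), AffineSubspace.span_union,
        AffineSubspace.affineSpan_coe]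
    obtain ⟨a₀, ha₀⟩ := (hb (Fin.last (k+1))).1
    obtain ⟨w₀, hw₀'⟩ := (hb 0).1
    have hw₀ : w₀ ∈ affineSpan K (⋃ i : Fin (k+1), (b i.castSucc : Set P)) :=
      subset_affineSpan K _ (Set.mem_iUnion.2 ⟨0, by simpa using hw₀'⟩)
    rw [hsplit, AffineSubspace.direction_sup hw₀ ha₀]
    haveI := hfd
    haveI : FiniteDimensional K (b (Fin.last (k+1))).direction := line_fd (hb _)
    haveI : FiniteDimensional K
        ((affineSpan K (⋃ i : Fin (k+1), (b i.castSucc : Set P))).direction ⊔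
          (b (Fin.last (k+1))).direction : Submodule K V) :=
      Submodule.finiteDimensional_sup _ _
    constructor
    · exact Submodule.finiteDimensional_sup _ _
    · calc finrank K ((affineSpan K (⋃ i : Fin (k+1), (b i.castSucc : Set P))).direction ⊔
            (b (Fin.last (k+1))).direction ⊔ K ∙ (a₀ -ᵥ w₀) : Submodule K V)
          ≤ finrank K ((affineSpan K (⋃ i : Fin (k+1), (b i.castSucc : Set P))).direction ⊔
            (b (Fin.last (k+1))).direction : Submodule K V) + finrank K (K ∙ (a₀ -ᵥ w₀)) :=
            Submodule.finrank_add_le_finrank_add_finrank _ _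
      _ ≤ (finrank K (affineSpan K (⋃ i : Fin (k+1), (b i.castSucc : Set P))).direction +
            finrank K (b (Fin.last (k+1))).direction) + finrank K (K ∙ (a₀ -ᵥ w₀)) := by
            have := Submodule.finrank_add_le_finrank_add_finrank
              (affineSpan K (⋃ i : Fin (k+1), (b i.castSucc : Set P))).direction
              (b (Fin.last (k+1))).direction
            omega
      _ ≤ 2 * (k + 1) + 1 := by
            have h1 := span_singleton_finrank_le (K := K) (a₀ -ᵥ w₀)
            have h2 := (hb (Fin.last (k+1))).2
            omega

end Dims

section Main
set_option maxHeartbeats 2000000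
variable {K V P : Type*} [DivisionRing K] [AddCommGroup V] [Module K V] [AddTorsor V P]
open Module

theorem key (hK : (3 : Cardinal) ≤ Cardinal.mk K) :
    ∀ (m : ℕ) (a : Fin m → AffineSubspace K P), (∀ i, ALine K (a i)) →
      Module.finrank K (affineSpan K (⋃ i, (a i : Set P))).direction = 2 * m - 1 →
      ∀ h : AffineSubspace K P, ALine K h → h ≤ affineSpan K (⋃ i, (a i : Set P)) →
      Reach (2 ^ (m + 1) - 4) (List.ofFn a) h := by
  intro m
  induction m with
  | zero =>
    intro a _ _ h hl hle
    exfalso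
    obtain ⟨p, hp⟩ := hl.1
    have h0 : (⋃ i : Fin 0, (a i : Set P)) = (∅ : Set P) := Set.iUnion_of_empty _
    have hmem := hle hp
    rw [h0, AffineSubspace.span_empty] at hmem
    exact hmem
  | succ m IH =>
    rcases Nat.eq_zero_or_pos m with rfl | hm
    · -- single line
      intro a ha _ h hl hle
      have hU : affineSpan K (⋃ i, (a i : Set P)) = a 0 := by
        rw [Set.Subset.antisymm (Set.iUnion_subset fun i => by
            rw [show i = 0 from Fin.ext (by omega)])
          (Set.subset_iUnion (fun i : Fin 1 => (a i : Set P)) 0),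
          AffineSubspace.affineSpan_coe]
      rw [hU] at hle
      obtain ⟨p, q, hp, hq, hpq⟩ := line_two_points hl
      have heq : h = a 0 := eq_line_of_le_of_two_mem (ha 0) hle hp hq hpq
      exact heq ▸ Reach.of_mem (by rw [List.mem_ofFn]; exact ⟨0, rfl⟩)
    · obtain ⟨m', rfl⟩ : ∃ m', m = m' + 1 := ⟨m - 1, by omega⟩
      intro a ha hdim h hl hle
      classical
      set A := a (Fin.last (m' + 1)) with hA
      set S' : Set P := ⋃ i : Fin (m' + 1), (a i.castSucc : Set P) with hS'
      set W' := affineSpan K S' with hWdef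
      have hsplit : affineSpan K (⋃ i, (a i : Set P)) = W' ⊔ A := by
        rw [hWdef, hS', iUnion_fin_succ (fun i => (a i : Set P)), AffineSubspace.span_union,
          AffineSubspace.affineSpan_coe, hA]
      -- base points
      obtain ⟨a₀, ha₀⟩ := (ha (Fin.last (m' + 1))).1
      obtain ⟨w₀, hw₀0⟩ := (ha 0).1
      have ha0W : (a (0 : Fin (m' + 2)) : Set P) ⊆ (W' : Set P) := by
        intro x hx
        exact subset_affineSpan K _ (Set.mem_iUnion.2 ⟨0, by simpa using hx⟩)
      have ha0W' : a (0 : Fin (m' + 2)) ≤ W' := ha0W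
      have hw₀ : w₀ ∈ W' := ha0W hw₀0
      -- direction generator of A
      have hAfd : FiniteDimensional K A.direction := line_fd (ha _)
      obtain ⟨d, hd, hd0⟩ : ∃ d ∈ A.direction, d ≠ 0 := by
        apply Submodule.exists_mem_ne_zero_of_ne_bot
        intro hbot
        have h2 := (ha (Fin.last (m' + 1))).2
        rw [← hA, hbot] at h2
        simp at h2
      have hAd : A.direction = K ∙ d := by
        symm
        apply Submodule.eq_of_le_of_finrank_le ((Submodule.span_singleton_le_iff_mem _ _).2 hd)
        rw [finrank_span_singleton hd0]
        have := (ha (Fin.last (m' + 1))).2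
        rw [← hA] at this
        omega
      set v : V := a₀ -ᵥ w₀ with hv
      set Kv : Submodule K V := K ∙ v with hKvdef
      -- dimension bookkeeping
      obtain ⟨hWfd, hWle⟩ := span_lines_fd m' (fun i => a i.castSucc) (fun i => ha _)
      haveI : FiniteDimensional K W'.direction := hWfd
      have hWle2 : finrank K W'.direction ≤ 2 * m' + 1 := hWle
      have hUdir : (affineSpan K (⋃ i, (a i : Set P))).direction =
          W'.direction ⊔ A.direction ⊔ Kv := by
        rw [hsplit, AffineSubspace.direction_sup hw₀ ha₀]
      have hdim' : finrank K (W'.direction ⊔ A.direction ⊔ Kv : Submodule K V) =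
          2 * m' + 3 := by
        rw [← hUdir, hdim]; omega
      haveI : FiniteDimensional K (W'.direction ⊔ A.direction : Submodule K V) :=
        Submodule.finiteDimensional_sup _ _
      have hA2 : finrank K A.direction = 1 := by
        have h4 := (ha (Fin.last (m' + 1))).2
        rw [← hA] at h4
        exact h4
      have hKv1 : finrank K Kv ≤ 1 := span_singleton_finrank_le (K := K) v
      have hsup1 := Submodule.finrank_add_le_finrank_add_finrank
        (W'.direction ⊔ A.direction : Submodule K V) Kv
      have hsup2 := Submodule.finrank_add_le_finrank_add_finrank W'.direction A.direction
      have hDrank : finrank K W'.direction = 2 * m' + 1 := by omega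
      have hvN : v ∉ W'.direction ⊔ A.direction := by
        intro hvmem
        have hKvle : Kv ≤ W'.direction ⊔ A.direction :=
          (Submodule.span_singleton_le_iff_mem _ _).2 hvmem
        have heq : W'.direction ⊔ A.direction ⊔ Kv = W'.direction ⊔ A.direction :=
          sup_eq_left.2 hKvle
        rw [heq] at hdim'
        omega
      -- linear functional
      obtain ⟨φ, hφN, hφv⟩ : ∃ φ : V →ₗ[K] K,
          (∀ x ∈ W'.direction ⊔ A.direction, φ x = 0) ∧ φ v = 1 := by
        set N : Submodule K V := W'.direction ⊔ A.direction with hNdef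
        have hvb : (N.mkQ v) ≠ 0 := by
          rw [Submodule.mkQ_apply, ne_eq, Submodule.Quotient.mk_eq_zero]
          exact hvN
        haveI : NoZeroSMulDivisors K (V ⧸ N) := by
          constructor
          intro c x hcx
          rcases eq_or_ne c 0 with rfl | hc
          · exact Or.inl rfl
          · refine Or.inr ?_
            have h2 := congrArg (fun y => c⁻¹ • y) hcx
            simpa [smul_smul, inv_mul_cancel₀ hc] using h2
        obtain ⟨C, hC⟩ := Submodule.exists_isCompl (K ∙ (N.mkQ v))
        set e := LinearEquiv.toSpanNonzeroSingleton K (V ⧸ N) (N.mkQ v) hvb with hedef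
        refine ⟨e.symm.toLinearMap ∘ₗ ((K ∙ (N.mkQ v)).linearProjOfIsCompl C hC) ∘ₗ N.mkQ,
          ?_, ?_⟩
        · intro x hx
          have h0 : N.mkQ x = 0 := by
            rw [Submodule.mkQ_apply, Submodule.Quotient.mk_eq_zero]; exact hx
          rw [LinearMap.comp_apply, LinearMap.comp_apply, h0, map_zero, map_zero]
        · have h1 : ((K ∙ (N.mkQ v)).linearProjOfIsCompl C hC) (N.mkQ v) =
              ⟨N.mkQ v, Submodule.mem_span_singleton_self _⟩ :=
            Submodule.linearProjOfIsCompl_apply_left hC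
              ⟨N.mkQ v, Submodule.mem_span_singleton_self _⟩
          simp only [LinearMap.comp_apply, LinearEquiv.coe_coe, h1]
          rw [← LinearEquiv.toSpanNonzeroSingleton_one K (V ⧸ N) (N.mkQ v) hvb]
          exact LinearEquiv.symm_apply_apply _ _
      -- parameter function
      set t : P → K := fun p => φ (p -ᵥ w₀) with htdef
      have htW : ∀ p ∈ W', t p = 0 := fun p hp =>
        hφN _ (Submodule.mem_sup_left (AffineSubspace.vsub_mem_direction hp hw₀))
      have htA : ∀ p ∈ A, t p = 1 := by
        intro p hp
        have hrw : p -ᵥ w₀ = (p -ᵥ a₀) + v := by rw [hv, vsub_add_vsub_cancel]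
        have : φ (p -ᵥ a₀) = 0 :=
          hφN _ (Submodule.mem_sup_right (AffineSubspace.vsub_mem_direction hp ha₀))
        simp only [htdef, hrw, map_add, this, hφv, zero_add]
      have htparam : ∀ (c : K) (x z : P), t (c • (z -ᵥ x) +ᵥ x) = c * (t z - t x) + t x := by
        intro c x z
        have h1 : (c • (z -ᵥ x) +ᵥ x) -ᵥ w₀ = c • (z -ᵥ x) + (x -ᵥ w₀) := vadd_vsub_assoc _ _ _
        have h2 : z -ᵥ x = (z -ᵥ w₀) - (x -ᵥ w₀) := (vsub_sub_vsub_cancel_right _ _ _).symm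
        simp only [htdef]
        rw [h1, h2, map_add, map_smul, map_sub, smul_eq_mul]
      have ht01 : (0 : K) ≠ 1 := zero_ne_one
      -- decomposition and transversals
      have hdecomp : ∀ p ∈ W' ⊔ A, ∃ u ∈ W'.direction, ∃ β : K,
          p -ᵥ w₀ = u + β • d + (t p) • v := by
        intro p hp
        have hw₀U : w₀ ∈ W' ⊔ A := (le_sup_left : W' ≤ W' ⊔ A) hw₀
        have hv1 : p -ᵥ w₀ ∈ (W' ⊔ A).direction := AffineSubspace.vsub_mem_direction hp hw₀U
        rw [AffineSubspace.direction_sup hw₀ ha₀] at hv1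
        obtain ⟨x, hx, y, hy, hxy⟩ := Submodule.mem_sup.1 hv1
        obtain ⟨u, hu, z, hz, huz⟩ := Submodule.mem_sup.1 hx
        obtain ⟨s, rfl⟩ := Submodule.mem_span_singleton.1 hy
        rw [hAd] at hz
        obtain ⟨β, rfl⟩ := Submodule.mem_span_singleton.1 hz
        have hts : t p = s := by
          have h2 : φ (p -ᵥ w₀) = s := by
            rw [← hxy, ← huz, map_add, map_add, map_smul, map_smul,
              hφN u (Submodule.mem_sup_left hu), hφN d (Submodule.mem_sup_right hd), hφv]
            simp
          exact h2
        refine ⟨u, hu, β, ?_⟩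
        rw [hts, ← hxy, ← huz]
      have htrans : ∀ p ∈ W' ⊔ A, t p ≠ 0 → t p ≠ 1 →
          ∃ f aa : P, f ∈ W' ∧ aa ∈ A ∧ p ∈ affineSpan K {f, aa} := by
        intro p hp hs0 hs1
        obtain ⟨u, hu, β, hdec⟩ := hdecomp p hp
        have hc : (1 : K) - t p ≠ 0 := sub_ne_zero.2 (Ne.symm hs1)
        refine ⟨(1 - t p)⁻¹ • u +ᵥ w₀, ((t p)⁻¹ * β) • d +ᵥ a₀,
          AffineSubspace.vadd_mem_of_mem_direction (Submodule.smul_mem _ _ hu) hw₀,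
          AffineSubspace.vadd_mem_of_mem_direction (Submodule.smul_mem _ _ hd) ha₀, ?_⟩
        have hkey : p = (t p) • ((((t p)⁻¹ * β) • d +ᵥ a₀) -ᵥ ((1 - t p)⁻¹ • u +ᵥ w₀)) +ᵥ
            ((1 - t p)⁻¹ • u +ᵥ w₀) := by
          rw [eq_vadd_iff_vsub_eq, vadd_vsub_assoc, vsub_vadd_eq_vsub_sub,
            vsub_vadd_eq_vsub_sub, ← hv, hdec]
          have h1 : t p * ((t p)⁻¹ * β) = β := by
            rw [← mul_assoc, mul_inv_cancel₀ hs0, one_mul]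
          have h2 : (1 - t p)⁻¹ - t p * (1 - t p)⁻¹ = 1 := by
            have h3 : ((1:K) - t p) * (1 - t p)⁻¹ = 1 := mul_inv_cancel₀ hc
            calc (1 - t p)⁻¹ - t p * (1 - t p)⁻¹ = ((1:K) - t p) * (1 - t p)⁻¹ := by
                  rw [sub_mul, one_mul]
            _ = 1 := h3
          have h3 : u = (1 - t p)⁻¹ • u - (t p * (1 - t p)⁻¹) • u := by
            rw [← sub_smul, h2, one_smul]
          rw [smul_add, smul_sub, smul_smul, smul_smul, h1]
          nth_rewrite 1 [h3]
          abel
        have h9 := mem_line_param (K := K) (t p) ((1 - t p)⁻¹ • u +ᵥ w₀)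
          (((t p)⁻¹ * β) • d +ᵥ a₀)
        rwa [← hkey] at h9
      have cover : ∀ p ∈ W' ⊔ A,
          ∃ f, f ∈ W' ∧ ∀ (w : AffineSubspace K P) (ls : List (AffineSubspace K P)),
            ALine K w → w ≤ W' → f ∈ w → A ∈ ls → a (0 : Fin (m' + 2)) ∈ ls → w ∈ ls →
            ∃ c L, GoodChain ls c ∧ c.length ≤ 2 ∧ ALine K L ∧ p ∈ L ∧ L ∈ ls ++ c := by
        intro p hpU
        by_cases hpA : p ∈ A
        · exact ⟨w₀, hw₀, fun w ls _ _ _ hAls _ _ =>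
            ⟨[], A, trivial, by simp, ha _, hpA, List.mem_append.2 (Or.inl hAls)⟩⟩
        by_cases hs0 : t p = 0
        · by_cases hpW : p ∈ W'
          · -- p ∈ W' : direct transversal through p and a₀
            refine ⟨p, hpW, fun w ls hwl hwW hfw hAls ha0ls hwls => ?_⟩
            have hpa₀ : p ≠ a₀ := fun he => ht01 (by rw [← hs0, he, htA a₀ ha₀])
            have hLl : ALine K (affineSpan K {p, a₀}) := line_through inferInstance hpa₀
            have hLw : affineSpan K {p, a₀} ≠ w := by
              intro he
              have h2 : a₀ ∈ w := he ▸ mem_line_right p a₀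
              have h3 := htW a₀ (hwW h2)
              rw [htA a₀ ha₀] at h3
              exact ht01 h3.symm
            have hLA : affineSpan K {p, a₀} ≠ A := fun he => hpA (he ▸ mem_line_left p a₀)
            exact ⟨[affineSpan K {p, a₀}], affineSpan K {p, a₀},
              ⟨hLl, Or.inr ⟨w, hwls, A, hAls, aMeetsTwo_of hLl hwl (ha _) hLw hLA
                (mem_line_left p a₀) hfw (mem_line_right p a₀) ha₀ hpa₀⟩, trivial⟩,
              by simp, hLl, mem_line_left p a₀, by simp⟩
          · -- t p = 0 but p ∉ W'
            obtain ⟨c0, hc0, hc1⟩ := exists_scalar_ne_ne hK 0 1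
            have hxU : c0 • (a₀ -ᵥ p) +ᵥ p ∈ W' ⊔ A :=
              AffineSubspace.smul_vsub_vadd_mem _ c0 ((le_sup_right : A ≤ W' ⊔ A) ha₀) hpU hpU
            have htx : t (c0 • (a₀ -ᵥ p) +ᵥ p) = c0 := by
              rw [htparam, htA a₀ ha₀, hs0]; simp
            obtain ⟨f, aa, hf, haa, hxl⟩ := htrans _ hxU (by rw [htx]; exact hc0)
              (by rw [htx]; exact hc1)
            refine ⟨f, hf, fun w ls hwl hwW hfw hAls ha0ls hwls => ?_⟩
            have hfaa : f ≠ aa := fun he => ht01 (by rw [← htW f hf, he, htA aa haa])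
            have hLxl : ALine K (affineSpan K {f, aa}) := line_through inferInstance hfaa
            have hLxw : affineSpan K {f, aa} ≠ w := by
              intro he
              have h2 := htW aa (hwW (he ▸ mem_line_right f aa))
              rw [htA aa haa] at h2
              exact ht01 h2.symm
            have hLxA : affineSpan K {f, aa} ≠ A := fun he =>
              ht01 (by rw [← htW f hf, htA f (he ▸ mem_line_left f aa)])
            have hpa₀ : p ≠ a₀ := fun he => ht01 (by rw [← hs0, he, htA a₀ ha₀])
            have hgl : ALine K (affineSpan K {p, a₀}) := line_through inferInstance hpa₀
            have hgA : affineSpan K {p, a₀} ≠ A := fun he => hpA (he ▸ mem_line_left p a₀)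
            have hxg : c0 • (a₀ -ᵥ p) +ᵥ p ∈ affineSpan K {p, a₀} := mem_line_param _ _ _
            have hga₀x : a₀ ≠ c0 • (a₀ -ᵥ p) +ᵥ p := by
              intro he
              apply hc1
              rw [← htx, ← he]
              exact htA a₀ ha₀
            have hgLx : affineSpan K {p, a₀} ≠ affineSpan K {f, aa} := by
              intro he
              have hfg : f ∈ affineSpan K {p, a₀} := he ▸ mem_line_left f aa
              obtain ⟨e1, hef⟩ := exists_param_of_mem_line hpa₀ hfg
              have h2 : t f = e1 := by rw [hef, htparam, htA a₀ ha₀, hs0]; simp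
              have he0 : e1 = 0 := by rw [← h2, htW f hf]
              rw [he0] at hef
              simp at hef
              exact hpW (hef ▸ hf)
            refine ⟨[affineSpan K {f, aa}, affineSpan K {p, a₀}], affineSpan K {p, a₀},
              ⟨hLxl, Or.inr ⟨w, hwls, A, hAls, aMeetsTwo_of hLxl hwl (ha _) hLxw hLxA
                (mem_line_left f aa) hfw (mem_line_right f aa) haa hfaa⟩,
               hgl, Or.inr ⟨A, List.mem_append.2 (Or.inl hAls), affineSpan K {f, aa},
                List.mem_append.2 (Or.inr (by simp)),
                aMeetsTwo_of hgl (ha _) hLxl hgA hgLx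
                  (mem_line_right p a₀) ha₀ hxg hxl hga₀x⟩, trivial⟩,
              by simp, hgl, mem_line_left p a₀, by simp⟩
        · by_cases hs1 : t p = 1
          · -- t p = 1 but p ∉ A
            obtain ⟨c0, hc0, hc1⟩ := exists_scalar_ne_ne hK 0 1
            have hpw₀ : p ≠ w₀ := fun he => hs0 (by rw [he]; exact htW w₀ hw₀)
            have hxU : c0 • (w₀ -ᵥ p) +ᵥ p ∈ W' ⊔ A :=
              AffineSubspace.smul_vsub_vadd_mem _ c0 ((le_sup_left : W' ≤ W' ⊔ A) hw₀) hpU hpU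
            have htx : t (c0 • (w₀ -ᵥ p) +ᵥ p) = -c0 + 1 := by
              rw [htparam, htW w₀ hw₀, hs1, zero_sub, mul_neg_one]
            have htx0 : t (c0 • (w₀ -ᵥ p) +ᵥ p) ≠ 0 := by
              rw [htx]
              intro h2
              exact hc1 (neg_add_eq_zero.1 h2)
            have htx1 : t (c0 • (w₀ -ᵥ p) +ᵥ p) ≠ 1 := by
              rw [htx]
              intro h2
              apply hc0
              have h3 : -c0 + 1 = 0 + 1 := by rw [h2, zero_add]
              have h4 := add_right_cancel h3
              simpa using h4
            obtain ⟨f, aa, hf, haa, hxl⟩ := htrans _ hxU htx0 htx1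
            refine ⟨f, hf, fun w ls hwl hwW hfw hAls ha0ls hwls => ?_⟩
            have hfaa : f ≠ aa := fun he => ht01 (by rw [← htW f hf, he, htA aa haa])
            have hLxl : ALine K (affineSpan K {f, aa}) := line_through inferInstance hfaa
            have hLxw : affineSpan K {f, aa} ≠ w := by
              intro he
              have h2 := htW aa (hwW (he ▸ mem_line_right f aa))
              rw [htA aa haa] at h2
              exact ht01 h2.symm
            have hLxA : affineSpan K {f, aa} ≠ A := fun he =>
              ht01 (by rw [← htW f hf, htA f (he ▸ mem_line_left f aa)])
            have hgl : ALine K (affineSpan K {p, w₀}) := line_through inferInstance hpw₀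
            have hga0 : affineSpan K {p, w₀} ≠ a (0 : Fin (m' + 2)) := by
              intro he
              exact hs0 (htW p (ha0W (he ▸ mem_line_left p w₀)))
            have hxg : c0 • (w₀ -ᵥ p) +ᵥ p ∈ affineSpan K {p, w₀} := mem_line_param _ _ _
            have hgw₀x : w₀ ≠ c0 • (w₀ -ᵥ p) +ᵥ p := by
              intro he
              exact htx0 (by rw [← he]; exact htW w₀ hw₀)
            have hgLx : affineSpan K {p, w₀} ≠ affineSpan K {f, aa} := by
              intro he
              have haag : aa ∈ affineSpan K {p, w₀} := he ▸ mem_line_right f aa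
              obtain ⟨e1, hef⟩ := exists_param_of_mem_line hpw₀ haag
              have h2 : t aa = -e1 + 1 := by
                rw [hef, htparam, htW w₀ hw₀, hs1, zero_sub, mul_neg_one]
              rw [htA aa haa] at h2
              have h3 : (0:K) + 1 = -e1 + 1 := by rw [zero_add]; exact h2
              have h4 := add_right_cancel h3
              have he0 : e1 = 0 := by simpa using h4.symm
              rw [he0] at hef
              simp at hef
              exact hpA (hef ▸ haa)
            refine ⟨[affineSpan K {f, aa}, affineSpan K {p, w₀}], affineSpan K {p, w₀},
              ⟨hLxl, Or.inr ⟨w, hwls, A, hAls, aMeetsTwo_of hLxl hwl (ha _) hLxw hLxA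
                (mem_line_left f aa) hfw (mem_line_right f aa) haa hfaa⟩,
               hgl, Or.inr ⟨a (0 : Fin (m' + 2)), List.mem_append.2 (Or.inl ha0ls),
                affineSpan K {f, aa}, List.mem_append.2 (Or.inr (by simp)),
                aMeetsTwo_of hgl (ha _) hLxl hga0 hgLx
                  (mem_line_right p w₀) hw₀0 hxg hxl hgw₀x⟩, trivial⟩,
              by simp, hgl, mem_line_left p w₀, by simp⟩
          · -- t p ∉ {0, 1}
            obtain ⟨f, aa, hf, haa, hpl⟩ := htrans p hpU hs0 hs1
            refine ⟨f, hf, fun w ls hwl hwW hfw hAls ha0ls hwls => ?_⟩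
            have hfaa : f ≠ aa := fun he => ht01 (by rw [← htW f hf, he, htA aa haa])
            have hLl : ALine K (affineSpan K {f, aa}) := line_through inferInstance hfaa
            have hLw : affineSpan K {f, aa} ≠ w := by
              intro he
              have h2 := htW aa (hwW (he ▸ mem_line_right f aa))
              rw [htA aa haa] at h2
              exact ht01 h2.symm
            have hLA : affineSpan K {f, aa} ≠ A := fun he =>
              ht01 (by rw [← htW f hf, htA f (he ▸ mem_line_left f aa)])
            exact ⟨[affineSpan K {f, aa}], affineSpan K {f, aa},
              ⟨hLl, Or.inr ⟨w, hwls, A, hAls, aMeetsTwo_of hLl hwl (ha _) hLw hLA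
                (mem_line_left f aa) hfw (mem_line_right f aa) haa hfaa⟩, trivial⟩,
              by simp, hLl, hpl, by simp⟩
      -- assembly
      obtain ⟨p, q, hp, hq, hpq⟩ := line_two_points hl
      have hple : p ∈ W' ⊔ A := by rw [← hsplit]; exact hle hp
      have hqle : q ∈ W' ⊔ A := by rw [← hsplit]; exact hle hq
      obtain ⟨fp, hfp, coverp⟩ := cover p hple
      obtain ⟨fq, hfq, coverq⟩ := cover q hqle
      obtain ⟨cw, w, hcw_gc, hcw_len, hwline, hwW, hfpw, hfqw, hwmem⟩ :
          ∃ (cw : List (AffineSubspace K P)) (w : AffineSubspace K P),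
            GoodChain (List.ofFn a) cw ∧ cw.length + 4 ≤ 2 ^ (m' + 1 + 1 + 1) - 4 ∧
            ALine K w ∧ w ≤ W' ∧ fp ∈ w ∧ fq ∈ w ∧ w ∈ List.ofFn a ++ cw := by
        rcases Nat.eq_zero_or_pos m' with rfl | hm'
        · have hW0 : W' = a (0 : Fin 2) := by
            apply le_antisymm
            · rw [hWdef, hS', affineSpan_le]
              refine Set.iUnion_subset fun i => ?_
              rw [Fin.fin_one_eq_zero i, Fin.castSucc_zero]
            · exact ha0W'
          refine ⟨[], a (0 : Fin 2), trivial, by norm_num, ha _, ha0W',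
            by rw [← hW0]; exact hfp, by rw [← hW0]; exact hfq, ?_⟩
          simp only [List.append_nil, List.mem_ofFn]
          exact ⟨0, rfl⟩
        · have hfd2 : W'.direction ≠ ⊥ := by
            intro hbot
            rw [hbot] at hDrank
            simp at hDrank
          obtain ⟨wl, hwl_line, hwl_le, hfp_w, hfq_w⟩ :
              ∃ wl, ALine K wl ∧ wl ≤ W' ∧ fp ∈ wl ∧ fq ∈ wl := by
            by_cases hfpq : fp = fq
            · obtain ⟨e₀, he₀, he₀0⟩ := Submodule.exists_mem_ne_zero_of_ne_bot hfd2
              have hne : fp ≠ e₀ +ᵥ fp := by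
                intro he
                apply he₀0
                have h2 := congrArg (· -ᵥ fp) he
                simpa using h2.symm
              exact ⟨affineSpan K {fp, e₀ +ᵥ fp}, line_through inferInstance hne,
                line_le hfp (AffineSubspace.vadd_mem_of_mem_direction he₀ hfp),
                mem_line_left _ _, hfpq ▸ mem_line_left _ _⟩
            · exact ⟨affineSpan K {fp, fq}, line_through inferInstance hfpq,
                line_le hfp hfq, mem_line_left _ _, mem_line_right _ _⟩
          have hdim2 : finrank K
              (affineSpan K (⋃ i : Fin (m' + 1), ((a i.castSucc : AffineSubspace K P) : Set P))).direction =
              2 * (m' + 1) - 1 := by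
            have h2 : finrank K W'.direction = 2 * (m' + 1) - 1 := by omega
            exact h2
          have hle2 : wl ≤ affineSpan K (⋃ i : Fin (m' + 1), ((a i.castSucc : AffineSubspace K P) : Set P)) :=
            hwl_le
          obtain ⟨c₀, hgc₀, hlen₀, hm₀⟩ :=
            IH (fun i => a i.castSucc) (fun i => ha _) hdim2 wl hwl_line hle2
          have hsub : ∀ y ∈ List.ofFn (fun i : Fin (m' + 1) => a i.castSucc),
              y ∈ List.ofFn a := by
            intro y hy
            rw [List.mem_ofFn] at hy ⊢
            obtain ⟨i, rfl⟩ := hy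
            exact ⟨_, rfl⟩
          refine ⟨c₀ ++ [wl], wl, (hgc₀.mono hsub).append ⟨hwl_line, hm₀.mono ?_, trivial⟩,
            ?_, hwl_line, hwl_le, hfp_w, hfq_w, by simp⟩
          · intro y hy
            rcases List.mem_append.1 hy with h' | h'
            · exact List.mem_append.2 (Or.inl (hsub y h'))
            · exact List.mem_append.2 (Or.inr h')
          · have h8 : 2 ≤ 2 ^ m' := by
              calc 2 = 2 ^ 1 := by norm_num
              _ ≤ 2 ^ m' := Nat.pow_le_pow_right (by norm_num) (by omega)
            simp only [List.length_append, List.length_singleton]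
            omega
      have hAls : A ∈ List.ofFn a := by rw [List.mem_ofFn]; exact ⟨Fin.last _, rfl⟩
      have ha0ls : a (0 : Fin (m' + 2)) ∈ List.ofFn a := by
        rw [List.mem_ofFn]; exact ⟨0, rfl⟩
      obtain ⟨cp, Lp, hcp_gc, hcp_len, hLp_line, hpLp, hLp_mem⟩ :=
        coverp w (List.ofFn a ++ cw) hwline hwW hfpw (List.mem_append.2 (Or.inl hAls))
          (List.mem_append.2 (Or.inl ha0ls)) hwmem
      obtain ⟨cq, Lq, hcq_gc, hcq_len, hLq_line, hqLq, hLq_mem⟩ :=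
        coverq w ((List.ofFn a ++ cw) ++ cp) hwline hwW hfqw
          (List.mem_append.2 (Or.inl (List.mem_append.2 (Or.inl hAls))))
          (List.mem_append.2 (Or.inl (List.mem_append.2 (Or.inl ha0ls))))
          (List.mem_append.2 (Or.inl hwmem))
      refine ⟨cw ++ (cp ++ cq), ?_, ?_, ?_⟩
      · refine hcw_gc.append (hcp_gc.append ?_)
        exact hcq_gc.mono (by intro y hy; simpa [List.append_assoc] using hy)
      · simp only [List.length_append]
        omega
      · rcases Classical.em (h ∈ List.ofFn a ++ (cw ++ (cp ++ cq))) with hmem | hmem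
        · exact Or.inl hmem
        · have hLpmem : Lp ∈ List.ofFn a ++ (cw ++ (cp ++ cq)) := by
            have h2 := hLp_mem
            simp only [List.mem_append] at h2 ⊢
            tauto
          have hLqmem : Lq ∈ List.ofFn a ++ (cw ++ (cp ++ cq)) := by
            have h2 := hLq_mem
            simp only [List.mem_append] at h2 ⊢
            tauto
          refine Or.inr ⟨Lp, hLpmem, Lq, hLqmem, aMeetsTwo_of hl hLp_line hLq_line ?_ ?_
            hp hpLp hq hqLq hpq⟩
          · rintro rfl; exact hmem hLpmem
          · rintro rfl; exact hmem hLqmem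

end Main

theorem statement13 {K V P : Type*} [DivisionRing K] [AddCommGroup V] [Module K V]
    [AddTorsor V P] {n m r : ℕ} (hn : 3 ≤ n)
    (hK : (3 : Cardinal) ≤ Cardinal.mk K)
    (hdim : Module.finrank K V = n) (hm : m = (n + 1) / 2) (hr : r = 2 ^ (m + 1) - 4)
    (a : Fin m → AffineSubspace K P) (ha : ∀ i, ALine K (a i))
    (hindep : Module.finrank K
      (affineSpan K (⋃ i, (a i : Set P))).direction = 2 * m - 1) :
    ∀ h : AffineSubspace K P, ALine K h → h ≤ affineSpan K (⋃ i, (a i : Set P)) →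
      MqPred r (List.ofFn a) h := by
  intro h hline hle
  subst hr
  have hm1 : 0 < m := by omega
  have hreach := key hK m a ha hindep h hline hle
  exact hreach.toMqPred (a₀ := a ⟨0, hm1⟩)
    (by rw [List.mem_ofFn]; exact ⟨⟨0, hm1⟩, rfl⟩) (ha _)
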